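/- Let τ̄ < 0 and C ≥ 0. Let φ : (−∞, τ̄] → ℝ be differentiable with sup_{σ ≤ τ̄} |φ(σ) − 2| < ∞, and let ρ : (−∞, τ̄] → [0, ∞) be nondecreasing. Suppose φ'(τ) ≤ φ(τ) − 2 + C·ρ(τ) for all τ ≤ τ̄. Then for every τ ≤ 2τ̄: φ(τ) ≥ 2 − m(τ/2)·e^{τ/2} − C·ρ(τ/2), where m(σ) := sup_{σ' ≤ σ} |φ(σ') − 2|. -/

import Mathlib

/-- The differential inequality estimate at the core of Lemma 6.2:
φ' ≤ φ − 2 + Cρ implies φ(τ) ≥ 2 − m(τ/2)e^{τ/2} − Cρ(τ/2) for τ ≤ 2τ̄. -/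
theorem differential_inequality_lower_bound
    (τb C : ℝ) (hτb : τb < 0) (hC : 0 ≤ C)
    (φ ρ m : ℝ → ℝ)
    (hφdiff : ∀ τ ≤ τb, DifferentiableAt ℝ φ τ)
    (hφbdd : ∃ M : ℝ, ∀ σ ≤ τb, |φ σ - 2| ≤ M)
    (hρ_nonneg : ∀ τ ≤ τb, 0 ≤ ρ τ)
    (hρ_mono : MonotoneOn ρ (Set.Iic τb))
    (hineq : ∀ τ ≤ τb, deriv φ τ ≤ φ τ - 2 + C * ρ τ)
    (hm : ∀ σ ≤ τb, m σ = sSup {y : ℝ | ∃ σ' ≤ σ, y = |φ σ' - 2|}) :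
    ∀ τ ≤ 2 * τb, 2 - m (τ / 2) * Real.exp (τ / 2) - C * ρ (τ / 2) ≤ φ τ := by
  intro τ hτ
  have hτ2 : τ / 2 ≤ τb := by linarith
  have hττ2 : τ ≤ τ / 2 := by nlinarith
  set K := C * ρ (τ / 2) with hKdef
  have hK0 : 0 ≤ K := mul_nonneg hC (hρ_nonneg _ hτ2)
  obtain ⟨M, hM⟩ := hφbdd
  have hmge : |φ (τ / 2) - 2| ≤ m (τ / 2) := by
    rw [hm _ hτ2]
    apply le_csSup
    · exact ⟨M, by rintro y ⟨σ', hσ', rfl⟩; exact hM σ' (hσ'.trans hτ2)⟩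
    · exact ⟨τ / 2, le_refl _, rfl⟩
  set h : ℝ → ℝ := fun s => (φ s - 2 + K) * Real.exp (-s) with hhdef
  have hderiv : ∀ σ ≤ τb,
      HasDerivAt h ((deriv φ σ - (φ σ - 2 + K)) * Real.exp (-σ)) σ := by
    intro σ hσ
    have h1 : HasDerivAt (fun s => φ s - 2 + K) (deriv φ σ) σ :=
      (((hφdiff σ hσ).hasDerivAt).sub_const 2).add_const K
    have h2 : HasDerivAt (fun s : ℝ => Real.exp (-s)) (Real.exp (-σ) * (-1)) σ :=
      (hasDerivAt_neg σ).exp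
    have : HasDerivAt h (deriv φ σ * Real.exp (-σ) + (φ σ - 2 + K) * (Real.exp (-σ) * -1)) σ :=
      h1.mul h2
    convert this using 1
    ring
  have hanti : AntitoneOn h (Set.Icc τ (τ / 2)) := by
    apply antitoneOn_of_deriv_nonpos (convex_Icc τ (τ / 2))
    · intro x hx
      exact ((hderiv x (hx.2.trans hτ2)).continuousAt).continuousWithinAt
    · intro x hx
      rw [interior_Icc] at hx
      exact ((hderiv x (hx.2.le.trans hτ2)).differentiableAt).differentiableWithinAt
    · intro x hx
      rw [interior_Icc] at hx
      have hxb : x ≤ τb := hx.2.le.trans hτ2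
      rw [(hderiv x hxb).deriv]
      apply mul_nonpos_of_nonpos_of_nonneg _ (Real.exp_pos _).le
      have hρle : ρ x ≤ ρ (τ / 2) := hρ_mono hxb hτ2 hx.2.le
      have := hineq x hxb
      nlinarith
  have key : (φ (τ / 2) - 2 + K) * Real.exp (-(τ / 2)) ≤ (φ τ - 2 + K) * Real.exp (-τ) :=
    hanti ⟨le_refl _, hττ2⟩ ⟨hττ2, le_refl _⟩ hττ2
  have h3 := mul_le_mul_of_nonneg_right key (Real.exp_pos τ).le
  have e1 : Real.exp (-(τ / 2)) * Real.exp τ = Real.exp (τ / 2) := by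
    rw [← Real.exp_add]; ring_nf
  have e2 : Real.exp (-τ) * Real.exp τ = 1 := by
    rw [← Real.exp_add]; simp
  rw [mul_assoc, e1, mul_assoc, e2, mul_one] at h3
  have hA : -(m (τ / 2)) ≤ φ (τ / 2) - 2 + K := by
    have := neg_abs_le (φ (τ / 2) - 2)
    linarith
  have h4 := mul_le_mul_of_nonneg_right hA (Real.exp_pos (τ / 2)).le
  rw [neg_mul] at h4
  linarith
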